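/- Let d ∈ ℝ and let ξ₁, ξ₂ be two real roots of the polynomial Q(ξ) = ξ³ − (3/2)ξ² + d with ξ₁ ≠ 1 and ξ₂ ≠ 1, satisfying the relation −ξ₂/(1−ξ₂) = 3ξ₁/(1−ξ₁). Then ξ₁ satisfies (ξ₁ − 1)(16ξ₁² − 4ξ₁ − 3) = 0. -/

import Mathlib

/-- If ξ₁, ξ₂ are two (distinct) real roots of Q(ξ) = ξ³ − (3/2)ξ² + d, neither equal to 1,
satisfying −ξ₂/(1−ξ₂) = 3ξ₁/(1−ξ₁), then (ξ₁ − 1)(16ξ₁² − 4ξ₁ − 3) = 0. -/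
theorem stmt_0 (d ξ₁ ξ₂ : ℝ)
    (hroot1 : ξ₁ ^ 3 - (3 / 2) * ξ₁ ^ 2 + d = 0)
    (hroot2 : ξ₂ ^ 3 - (3 / 2) * ξ₂ ^ 2 + d = 0)
    (hne : ξ₁ ≠ ξ₂)
    (h1 : ξ₁ ≠ 1) (h2 : ξ₂ ≠ 1)
    (hrel : -ξ₂ / (1 - ξ₂) = 3 * ξ₁ / (1 - ξ₁)) :
    (ξ₁ - 1) * (16 * ξ₁ ^ 2 - 4 * ξ₁ - 3) = 0 := by
  have h1' : (1 : ℝ) - ξ₁ ≠ 0 := fun h => h1 (by linarith)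
  have h2' : (1 : ℝ) - ξ₂ ≠ 0 := fun h => h2 (by linarith)
  have hrel' : -ξ₂ * (1 - ξ₁) = 3 * ξ₁ * (1 - ξ₂) := by
    field_simp at hrel; linarith
  have hsym : ξ₁ ^ 2 + ξ₁ * ξ₂ + ξ₂ ^ 2 - (3 / 2) * (ξ₁ + ξ₂) = 0 := by
    have hd : ξ₁ - ξ₂ ≠ 0 := sub_ne_zero.mpr hne
    have := mul_left_cancel₀ hd (show (ξ₁ - ξ₂) * (ξ₁ ^ 2 + ξ₁ * ξ₂ + ξ₂ ^ 2 - (3 / 2) * (ξ₁ + ξ₂)) = (ξ₁ - ξ₂) * 0 by ring_nf; nlinarith [hroot1, hroot2])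
    linarith
  -- ξ₂ (4ξ₁ - 1) = 3 ξ₁
  have hxi2 : ξ₂ * (4 * ξ₁ - 1) = 3 * ξ₁ := by linarith [hrel']
  rcases eq_or_ne (4 * ξ₁ - 1) 0 with hc | hc
  · exfalso
    have : ξ₁ = 1 / 4 := by linarith
    rw [this] at hxi2; simp at hxi2
  · have hx2 : ξ₂ = 3 * ξ₁ / (4 * ξ₁ - 1) := by
      field_simp
      rw [eq_div_iff (by intro h; apply hc; linarith)]; linarith [hxi2]
    rw [hx2] at hsym
    field_simp at hsym
    rcases eq_or_ne ξ₁ 0 with h0 | h0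
    · exfalso
      have : ξ₂ = 0 := by rw [h0] at hxi2; linarith
      exact hne (by rw [h0, this])
    · have key : (4 * ξ₁ - 1) ^ 2 * (2 * ξ₁) * ((ξ₁ - 1) * (16 * ξ₁ ^ 2 - 4 * ξ₁ - 3)) = 0 := by
        have hD : ξ₁ * 4 - 1 ≠ 0 := by intro h; apply hc; linarith
        have e : ξ₁ * (ξ₁ * (1 + 3 / (ξ₁ * 4 - 1) + 3 ^ 2 / (ξ₁ * 4 - 1) ^ 2) * 2 - 3 * (1 + 3 / (ξ₁ * 4 - 1))) * (ξ₁ * 4 - 1) ^ 2 = ξ₁ * (2 * ξ₁ * ((ξ₁ * 4 - 1) ^ 2 + 3 * (ξ₁ * 4 - 1) + 9) - 3 * (ξ₁ * 4 - 1) * ((ξ₁ * 4 - 1) + 3)) := by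
          field_simp; ring
        linear_combination (ξ₁ * 4 - 1) ^ 2 * ((ξ₁ * 4 - 1) ^ 2 * hsym) - (ξ₁ * 4 - 1) ^ 2 * e
      rcases mul_eq_zero.mp key with h | h
      · rcases mul_eq_zero.mp h with h | h
        · exact absurd (pow_eq_zero_iff (by norm_num) |>.mp h) hc
        · exact absurd (by linarith : ξ₁ = 0) h0
      · exact h
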